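/- In the formal power series ring ℂ[[X]], the family of exponentials (e^{αX})_{α∈ℂ}, where e^{αX} = Σ_{n≥0} αⁿXⁿ/n! is the rescaling of the exponential series by α, is linearly independent over the polynomial subring ℂ[X]: any finite relation Σ_α P_α(X)·e^{αX} = 0 with P_α ∈ ℂ[X] forces all P_α = 0. -/

import Mathlib

open PowerSeries Polynomial

noncomputable def expScaled (α : ℂ) : PowerSeries ℂ :=
  PowerSeries.mk fun n => α ^ n / (Nat.factorial n : ℂ)

lemma derivative_expScaled (α : ℂ) :
    d⁄dX ℂ (expScaled α) = PowerSeries.C α * expScaled α := by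
  ext n
  rw [PowerSeries.coeff_derivative]
  simp only [expScaled, PowerSeries.coeff_mk, PowerSeries.coeff_C_mul]
  have h : ((n+1).factorial : ℂ) = (n+1) * n.factorial := by
    push_cast [Nat.factorial_succ]; ring
  have h1 : ((n:ℂ)+1) ≠ 0 := by exact_mod_cast n.succ_ne_zero
  have h2 : ((n.factorial : ℂ)) ≠ 0 := by exact_mod_cast n.factorial_ne_zero
  rw [h]
  field_simp
  ring

lemma expScaled_ne_zero (α : ℂ) : expScaled α ≠ 0 := by
  intro h
  have := congrArg (PowerSeries.coeff 0) h
  simp [expScaled] at this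

/-- The operator `Q ↦ Q' + (α - α₀) Q` corresponding to `(d/dX - α₀)` on `Q e^{αX}`. -/
noncomputable def Dop (α₀ α : ℂ) (Q : Polynomial ℂ) : Polynomial ℂ :=
  derivative Q + Polynomial.C (α - α₀) * Q

lemma Top_zero_reflect {α₀ α : ℂ} (hne : α ≠ α₀) {Q : Polynomial ℂ}
    (h : Dop α₀ α Q = 0) : Q = 0 := by
  by_contra hQ
  have hc : α - α₀ ≠ 0 := sub_ne_zero.mpr hne
  have h0 := congrArg (fun p => Polynomial.coeff p Q.natDegree) h
  simp only [Dop, Polynomial.coeff_add, Polynomial.coeff_derivative,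
    Polynomial.coeff_C_mul, Polynomial.coeff_zero] at h0
  rw [Polynomial.coeff_natDegree_succ_eq_zero, zero_mul, zero_add] at h0
  exact (Polynomial.leadingCoeff_ne_zero.mpr hQ) (by
    have := mul_eq_zero.mp h0
    tauto)

lemma Top_iter_zero_reflect {α₀ α : ℂ} (hne : α ≠ α₀) (k : ℕ) {Q : Polynomial ℂ}
    (h : (Dop α₀ α)^[k] Q = 0) : Q = 0 := by
  induction k generalizing Q with
  | zero => simpa using h
  | succ n ih =>
    rw [Function.iterate_succ_apply] at h
    exact Top_zero_reflect hne (ih h)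

lemma Top_self (α₀ : ℂ) (Q : Polynomial ℂ) : Dop α₀ α₀ Q = derivative Q := by
  simp [Dop]

lemma step (α₀ : ℂ) (s : Finset ℂ) (P : ℂ → Polynomial ℂ)
    (h : ∑ α ∈ s, (↑(P α) : PowerSeries ℂ) * expScaled α = 0) :
    ∑ α ∈ s, (↑(Dop α₀ α (P α)) : PowerSeries ℂ) * expScaled α = 0 := by
  have key : ∀ α ∈ s, (↑(Dop α₀ α (P α)) : PowerSeries ℂ) * expScaled α
      = d⁄dX ℂ ((↑(P α) : PowerSeries ℂ) * expScaled α)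
        - PowerSeries.C α₀ * ((↑(P α) : PowerSeries ℂ) * expScaled α) := by
    intro α _
    rw [Derivation.leibniz, derivative_expScaled, PowerSeries.derivative_coe]
    simp only [Dop, Polynomial.coe_add, Polynomial.coe_mul, Polynomial.coe_C,
      smul_eq_mul, Polynomial.coe_sub, PowerSeries.C_eq_algebraMap, map_sub]
    ring
  rw [Finset.sum_congr rfl key, Finset.sum_sub_distrib, ← Finset.mul_sum, h,
    ← map_sum, h, map_zero, mul_zero, sub_zero]

lemma step_iter (α₀ : ℂ) (s : Finset ℂ) (P : ℂ → Polynomial ℂ) (k : ℕ)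
    (h : ∑ α ∈ s, (↑(P α) : PowerSeries ℂ) * expScaled α = 0) :
    ∑ α ∈ s, (↑((Dop α₀ α)^[k] (P α)) : PowerSeries ℂ) * expScaled α = 0 := by
  induction k with
  | zero => simpa using h
  | succ n ih =>
    have := step α₀ s (fun α => (Dop α₀ α)^[n] (P α)) ih
    simpa [Function.iterate_succ_apply'] using this

theorem exponentials_linearly_independent_over_polynomial_ring :
    ∀ (s : Finset ℂ) (P : ℂ → Polynomial ℂ),
      (∑ α ∈ s, (↑(P α) : PowerSeries ℂ) * expScaled α = 0) →
      ∀ α ∈ s, P α = 0 := by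
  intro s
  induction s using Finset.strongInduction with
  | _ s ih =>
    intro P h α hα
    set k : ℕ := (P α).natDegree + 1 with hk
    have hit := step_iter α s P k h
    have hQα : (Dop α α)^[k] (P α) = 0 := by
      have hfun : Dop α α = fun Q => derivative Q := funext (Top_self α)
      rw [hfun]
      exact Polynomial.iterate_derivative_eq_zero (by omega)
    -- split off the α term
    rw [← Finset.add_sum_erase _ _ hα, hQα] at hit
    simp only [Polynomial.coe_zero, zero_mul, zero_add] at hit
    have herase := ih (s.erase α) (Finset.erase_ssubset hα)
      (fun β => (Dop α β)^[k] (P β)) hit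
    have hPβ : ∀ β ∈ s.erase α, P β = 0 := fun β hβ =>
      Top_iter_zero_reflect (Finset.ne_of_mem_erase hβ) k (herase β hβ)
    -- now original relation reduces to single term
    rw [← Finset.add_sum_erase _ _ hα] at h
    have hz : ∑ β ∈ s.erase α, (↑(P β) : PowerSeries ℂ) * expScaled β = 0 := by
      apply Finset.sum_eq_zero
      intro β hβ
      rw [hPβ β hβ]
      simp
    rw [hz, add_zero] at h
    rcases mul_eq_zero.mp h with h' | h'
    · exact Polynomial.coe_eq_zero_iff.mp h'
    · exact absurd h' (expScaled_ne_zero α)
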